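/- Let F be a field, V = F^{n+1}, and let x ⊆ V be a subspace with dim x = b+1, where δ ≤ b ≤ k ≤ n. Let W ⊆ ⋀^{k+1} V be the subspace spanned by all vectors of the form u_0 ∧ ⋯ ∧ u_δ ∧ w_{δ+1} ∧ ⋯ ∧ w_k with u_0,…,u_δ ∈ x and w_{δ+1},…,w_k ∈ V. Then dim W = Σ_{d=δ}^{b} C(b+1, d+1)·C(n−b, k−d), where C(·,·) denotes the binomial coefficient. -/

import Mathlib

set_option linter.unusedSectionVars false
set_option linter.unusedVariables false
set_option maxHeartbeats 1000000

open ExteriorAlgebra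

section Aux

variable {F : Type*} [Field F] {V : Type*} [AddCommGroup V] [Module F V]
variable {ι' : Type*} [LinearOrder ι'] (v : Module.Basis ι' F V)

/-- Wedge product of basis vectors along a list of indices. -/
noncomputable def eL (l : List ι') : ExteriorAlgebra F V :=
  (l.map (fun i => ExteriorAlgebra.ι F (v i))).prod

@[simp] lemma eL_nil : eL v ([] : List ι') = 1 := rfl

@[simp] lemma eL_cons (a : ι') (l : List ι') :
    eL v (a :: l) = ExteriorAlgebra.ι F (v a) * eL v l := by
  simp [eL]

/-- Contraction by the `i`-th coordinate functional. -/
noncomputable def phi (i : ι') : ExteriorAlgebra F V →ₗ[F] ExteriorAlgebra F V :=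
  CliffordAlgebra.contractLeft (v.coord i)

lemma phi_mul (i : ι') (a : V) (y : ExteriorAlgebra F V) :
    phi v i (ExteriorAlgebra.ι F a * y) = v.coord i a • y - ExteriorAlgebra.ι F a * phi v i y :=
  CliffordAlgebra.contractLeft_ι_mul _ _ _

lemma coord_self_basis (i j : ι') : v.coord i (v j) = if j = i then 1 else 0 := by
  simp [Module.Basis.coord_apply, Module.Basis.repr_self, Finsupp.single_apply]

lemma phi_eL_of_not_mem (i : ι') (l : List ι') (h : i ∉ l) : phi v i (eL v l) = 0 := by
  induction l with
  | nil => simp [phi, eL]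
  | cons a t ih =>
      have hia : a ≠ i := fun hh => h (hh ▸ List.mem_cons_self (a := a) (l := t))
      have hit : i ∉ t := fun hh => h (List.mem_cons_of_mem _ hh)
      rw [eL_cons, phi_mul, coord_self_basis, if_neg hia, ih hit, mul_zero, zero_smul, sub_zero]

lemma phi_eL_of_mem (i : ι') (l : List ι') (hn : l.Nodup) (h : i ∈ l) :
    ∃ c : F, (c = 1 ∨ c = -1) ∧ phi v i (eL v l) = c • eL v (l.erase i) := by
  induction l with
  | nil => simp at h
  | cons a t ih =>
      rcases eq_or_ne i a with rfl | hne
      · refine ⟨1, Or.inl rfl, ?_⟩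
        have hit : i ∉ t := (List.nodup_cons.mp hn).1
        rw [eL_cons, phi_mul, coord_self_basis, if_pos rfl, phi_eL_of_not_mem v i t hit,
          mul_zero, sub_zero, List.erase_cons_head, one_smul]
      · have hit : i ∈ t := by
          rcases List.mem_cons.mp h with h1 | h1
          · exact absurd h1 hne
          · exact h1
        obtain ⟨c, hc, hphi⟩ := ih (List.nodup_cons.mp hn).2 hit
        refine ⟨-c, by rcases hc with rfl | rfl <;> simp, ?_⟩
        rw [eL_cons, phi_mul, coord_self_basis, if_neg (Ne.symm hne), zero_smul, zero_sub,
          hphi, List.erase_cons_tail, eL_cons, mul_smul_comm, neg_smul]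
        simpa using Ne.symm hne

/-- Iterated contraction followed by projection to degree zero. -/
noncomputable def Phi (l : List ι') : ExteriorAlgebra F V →ₗ[F] F :=
  l.foldr (fun i acc => acc ∘ₗ phi v i) (ExteriorAlgebra.algebraMapInv).toLinearMap

@[simp] lemma Phi_nil (y : ExteriorAlgebra F V) :
    Phi v ([] : List ι') y = ExteriorAlgebra.algebraMapInv y := rfl

@[simp] lemma Phi_cons (a : ι') (l : List ι') (y : ExteriorAlgebra F V) :
    Phi v (a :: l) y = Phi v l (phi v a y) := rfl

lemma Phi_eL_self (l : List ι') (hs : l.Pairwise (· < ·)) : Phi v l (eL v l) = 1 := by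
  induction l with
  | nil => simp
  | cons a t ih =>
      have hat : a ∉ t := fun h => lt_irrefl a ((List.pairwise_cons.mp hs).1 a h)
      rw [Phi_cons, eL_cons, phi_mul, coord_self_basis, if_pos rfl,
        phi_eL_of_not_mem v a t hat, mul_zero, sub_zero, one_smul]
      exact ih (List.pairwise_cons.mp hs).2

lemma Phi_eL_ne (s : List ι') : ∀ t : List ι', s.Pairwise (· < ·) → t.Pairwise (· < ·) →
    s.length = t.length → s ≠ t → Phi v s (eL v t) = 0 := by
  induction s with
  | nil =>
      intro t _ _ hlen hne
      exact absurd (List.length_eq_zero_iff.mp hlen.symm).symm hne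
  | cons a s' ih =>
      intro t hs ht hlen hne
      rw [Phi_cons]
      by_cases hat : a ∈ t
      · obtain ⟨c, hc, hphi⟩ := phi_eL_of_mem v a t ht.nodup hat
        rw [hphi, map_smul]
        have hne' : s' ≠ t.erase a := by
          intro he
          apply hne
          cases t with
          | nil => simp at hat
          | cons b t' =>
              rcases eq_or_ne b a with rfl | hba
              · rw [List.erase_cons_head] at he
                rw [he]
              · exfalso
                have hat' : a ∈ t' := by
                  rcases List.mem_cons.mp hat with h1 | h1
                  · exact absurd h1.symm hba
                  · exact h1
                have hba' : b < a := (List.pairwise_cons.mp ht).1 a hat'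
                have hbs' : b ∈ s' := by
                  rw [he, List.erase_cons_tail, List.mem_cons]
                  · exact Or.inl rfl
                  · simpa using hba
                have : a < b := (List.pairwise_cons.mp hs).1 b hbs'
                exact absurd (this.trans hba') (lt_irrefl a)
        have hlen' : s'.length = (t.erase a).length := by
          rw [List.length_erase_of_mem hat]
          have := hlen
          simp only [List.length_cons] at this
          omega
        rw [ih (t.erase a) (List.pairwise_cons.mp hs).2
          (ht.sublist (List.erase_sublist (a := a) (l := t))) hlen' hne', smul_zero]
      · rw [phi_eL_of_not_mem v a t hat, map_zero]

lemma linearIndependent_eL {σ : Type*} (L : σ → List ι') (m : ℕ)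
    (hsort : ∀ s, (L s).Pairwise (· < ·)) (hlen : ∀ s, (L s).length = m)
    (hinj : Function.Injective L) :
    LinearIndependent F (fun s => eL v (L s)) := by
  rw [linearIndependent_iff']
  intro fs g hsum i hi
  have h0 := congrArg (Phi v (L i)) hsum
  rw [map_sum, map_zero] at h0
  have h1 : ∀ j ∈ fs, j ≠ i → Phi v (L i) (g j • eL v (L j)) = 0 := by
    intro j _ hj
    rw [map_smul, Phi_eL_ne v (L i) (L j) (hsort i) (hsort j)
      ((hlen i).trans (hlen j).symm) (fun h => hj (hinj h).symm), smul_zero]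
  rw [Finset.sum_eq_single i h1 (fun h => absurd hi h)] at h0
  rwa [map_smul, Phi_eL_self v (L i) (hsort i), smul_eq_mul, mul_one] at h0

lemma eL_ofFn (m : ℕ) (g : Fin m → ι') :
    eL v (List.ofFn g) = ExteriorAlgebra.ιMulti F m (fun i => v (g i)) := by
  rw [ExteriorAlgebra.ιMulti_apply, eL, List.map_ofFn]
  rfl

end Aux

lemma ofFn_split {α : Type*} {p q N : ℕ} (h : N = p + q) (g : Fin N → α) :
    List.ofFn g = (List.ofFn fun i : Fin p => g (Fin.cast h.symm (Fin.castAdd q i))) ++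
      (List.ofFn fun i : Fin q => g (Fin.cast h.symm (Fin.natAdd p i))) := by
  rw [List.ofFn_congr h g, List.ofFn_add]
  rfl

lemma card_filter_val_lt (N m : ℕ) (h : m ≤ N) :
    (Finset.univ.filter (fun i : Fin N => i.1 < m)).card = m := by
  have heq : Finset.univ.filter (fun i : Fin N => i.1 < m)
      = Finset.univ.map (Fin.castLEEmb h) := by
    ext i
    simp only [Finset.mem_filter, Finset.mem_univ, true_and, Finset.mem_map]
    constructor
    · intro hi
      exact ⟨⟨i.1, hi⟩, by ext; simp⟩
    · rintro ⟨j, rfl⟩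
      simp
  rw [heq, Finset.card_map, Finset.card_univ, Fintype.card_fin]

lemma orderEmb_initial {N m : ℕ} (S xI : Finset (Fin N)) (hS : S.card = m)
    (hdc : ∀ a b : Fin N, a ≤ b → b ∈ xI → a ∈ xI)
    (δ' : ℕ) (hcard : δ' ≤ (S ∩ xI).card)
    (j : Fin m) (hj : j.1 < δ') : S.orderEmbOfFin hS j ∈ xI := by
  classical
  set o := S.orderEmbOfFin hS with ho
  set J := Finset.univ.filter (fun j : Fin m => o j ∈ xI) with hJ
  have hJcard : J.card = (S ∩ xI).card := by
    apply Finset.card_bij (fun j _ => o j)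
    · intro a ha
      rw [hJ, Finset.mem_filter] at ha
      exact Finset.mem_inter.mpr ⟨S.orderEmbOfFin_mem hS a, ha.2⟩
    · intro a _ b _ hab
      exact o.injective hab
    · intro a ha
      rw [Finset.mem_inter] at ha
      have hr : a ∈ Set.range o := by
        rw [ho, Finset.range_orderEmbOfFin]
        exact ha.1
      obtain ⟨j', hj'⟩ := hr
      exact ⟨j', Finset.mem_filter.mpr ⟨Finset.mem_univ _, hj' ▸ ha.2⟩, hj'⟩
  by_contra hne
  have hsub : J ⊆ Finset.Iio j := by
    intro a ha
    rw [hJ, Finset.mem_filter] at ha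
    rw [Finset.mem_Iio]
    by_contra hle
    push_neg at hle
    exact hne (hdc (o j) (o a) (o.monotone hle) ha.2)
  have hc := Finset.card_le_card hsub
  rw [Fin.card_Iio] at hc
  omega

lemma card_collection (n k b δ : ℕ) (hδb : δ ≤ b) (hbk : b ≤ k) (hkn : k ≤ n)
    (xIdx : Finset (Fin (n+1))) (hxIdx : xIdx.card = b+1) :
    (Finset.univ.filter (fun S : Finset (Fin (n+1)) =>
        S.card = k+1 ∧ δ+1 ≤ (S ∩ xIdx).card)).card
      = ∑ d ∈ Finset.Icc δ b, Nat.choose (b+1) (d+1) * Nat.choose (n-b) (k-d) := by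
  have hcompl : xIdxᶜ.card = n - b := by
    rw [Finset.card_compl, hxIdx, Fintype.card_fin]
    omega
  rw [Finset.card_eq_sum_card_fiberwise
    (f := fun S => (S ∩ xIdx).card - 1) (t := Finset.Icc δ b) ?memb]
  case memb =>
    intro S hS
    rw [Finset.mem_coe, Finset.mem_filter] at hS
    have h1 : (S ∩ xIdx).card ≤ b + 1 := hxIdx ▸ Finset.card_le_card Finset.inter_subset_right
    have h2 := hS.2.2
    refine Finset.mem_coe.mpr (Finset.mem_Icc.mpr ?_)
    dsimp only
    omega
  refine Finset.sum_congr rfl (fun d hd => ?_)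
  rw [Finset.mem_Icc] at hd
  rw [Finset.filter_filter]
  have hfe : (Finset.univ.filter (fun S : Finset (Fin (n+1)) =>
      (S.card = k+1 ∧ δ+1 ≤ (S ∩ xIdx).card) ∧ (S ∩ xIdx).card - 1 = d)) =
      (Finset.univ.filter (fun S : Finset (Fin (n+1)) =>
      S.card = k+1 ∧ (S ∩ xIdx).card = d+1)) := by
    refine Finset.filter_congr (fun S _ => ?_)
    constructor
    · rintro ⟨⟨h1, h2⟩, h3⟩; exact ⟨h1, by omega⟩
    · rintro ⟨h1, h2⟩; exact ⟨⟨h1, by omega⟩, by omega⟩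
  rw [hfe]
  have hcard : (Finset.univ.filter (fun S : Finset (Fin (n+1)) =>
      S.card = k+1 ∧ (S ∩ xIdx).card = d+1)).card =
      ((xIdx.powersetCard (d+1)) ×ˢ (xIdxᶜ.powersetCard (k-d))).card := by
    refine Finset.card_bij' (fun S _ => (S ∩ xIdx, S \ xIdx))
      (fun p _ => p.1 ∪ p.2) ?_ ?_ ?_ ?_
    · intro S hS
      rw [Finset.mem_filter] at hS
      obtain ⟨-, h1, h2⟩ := hS
      rw [Finset.mem_product, Finset.mem_powersetCard, Finset.mem_powersetCard]
      dsimp only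
      have hsd : (S ∩ xIdx).card + (S \ xIdx).card = S.card :=
        Finset.card_inter_add_card_sdiff S xIdx
      refine ⟨⟨Finset.inter_subset_right, h2⟩, ?_, by omega⟩
      intro a ha
      rw [Finset.mem_sdiff] at ha
      rw [Finset.mem_compl]
      exact ha.2
    · intro p hp
      rw [Finset.mem_product, Finset.mem_powersetCard, Finset.mem_powersetCard] at hp
      obtain ⟨⟨hA, hAc⟩, hB, hBc⟩ := hp
      have hdisj : Disjoint p.1 p.2 := by
        rw [Finset.disjoint_left]
        intro a ha hb
        exact (Finset.mem_compl.mp (hB hb)) (hA ha)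
      have hint : (p.1 ∪ p.2) ∩ xIdx = p.1 := by
        ext a
        simp only [Finset.mem_inter, Finset.mem_union]
        constructor
        · rintro ⟨h1 | h1, h2⟩
          · exact h1
          · exact absurd h2 (Finset.mem_compl.mp (hB h1))
        · exact fun h => ⟨Or.inl h, hA h⟩
      rw [Finset.mem_filter]
      refine ⟨Finset.mem_univ _, ?_, by rw [hint, hAc]⟩
      rw [Finset.card_union_of_disjoint hdisj, hAc, hBc]
      omega
    · intro S hS
      ext a
      simp only [Finset.mem_union, Finset.mem_inter, Finset.mem_sdiff]
      tauto
    · intro p hp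
      rw [Finset.mem_product, Finset.mem_powersetCard, Finset.mem_powersetCard] at hp
      obtain ⟨⟨hA, hAc⟩, hB, hBc⟩ := hp
      have h1 : (p.1 ∪ p.2) ∩ xIdx = p.1 := by
        ext a
        simp only [Finset.mem_inter, Finset.mem_union]
        constructor
        · rintro ⟨h1 | h1, h2⟩
          · exact h1
          · exact absurd h2 (Finset.mem_compl.mp (hB h1))
        · exact fun h => ⟨Or.inl h, hA h⟩
      have h2 : (p.1 ∪ p.2) \ xIdx = p.2 := by
        ext a
        simp only [Finset.mem_sdiff, Finset.mem_union]
        constructor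
        · rintro ⟨h1 | h1, h2⟩
          · exact absurd (hA h1) h2
          · exact h1
        · exact fun h => ⟨Or.inr h, Finset.mem_compl.mp (hB h)⟩
      rw [h1, h2]
  rw [hcard, Finset.card_product, Finset.card_powersetCard, Finset.card_powersetCard,
    hxIdx, hcompl]

open ExteriorAlgebra in
/-- Let `x ⊆ V = F^{n+1}` with `dim x = b+1`, `δ ≤ b ≤ k ≤ n`, and let `W ⊆ ⋀^{k+1} V` be
the span of all wedges `u₀ ∧ ⋯ ∧ u_δ ∧ w_{δ+1} ∧ ⋯ ∧ w_k` with `u_i ∈ x` and `w_j ∈ V`.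
Then `dim W = Σ_{d=δ}^{b} C(b+1, d+1)·C(n−b, k−d)`. -/
theorem dim_schubert_linear_span {F : Type*} [Field F]
    (n k b δ : ℕ) (hδb : δ ≤ b) (hbk : b ≤ k) (hkn : k ≤ n)
    (x : Submodule F (Fin (n + 1) → F)) (hx : Module.finrank F x = b + 1)
    (W : Submodule F (ExteriorAlgebra F (Fin (n + 1) → F)))
    (hW : W = Submodule.span F {w : ExteriorAlgebra F (Fin (n + 1) → F) |
      ∃ (u : Fin (δ + 1) → (Fin (n + 1) → F)) (t : Fin (k - δ) → (Fin (n + 1) → F)),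
        (∀ i, u i ∈ x) ∧
        w = ((List.ofFn fun i => ι F (u i)) ++ (List.ofFn fun i => ι F (t i))).prod}) :
    Module.finrank F W =
      ∑ d ∈ Finset.Icc δ b, Nat.choose (b + 1) (d + 1) * Nat.choose (n - b) (k - d) := by
  classical
  -- an adapted basis
  obtain ⟨y, hy⟩ := Submodule.exists_isCompl x
  have hVrank : Module.finrank F (Fin (n+1) → F) = n + 1 := Module.finrank_fin_fun F
  have hyrank : Module.finrank F y = n - b := by
    have h1 := Submodule.finrank_add_eq_of_isCompl hy
    rw [hx, hVrank] at h1
    omega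
  let bx : Module.Basis (Fin (b+1)) F x := Module.finBasisOfFinrankEq F x hx
  let by' : Module.Basis (Fin (n-b)) F y := Module.finBasisOfFinrankEq F y hyrank
  have hsum : b + 1 + (n - b) = n + 1 := by omega
  let v : Module.Basis (Fin (n+1)) F (Fin (n+1) → F) :=
    ((bx.prod by').map (Submodule.prodEquivOfIsCompl x y hy)).reindex
      (finSumFinEquiv.trans (finCongr hsum))
  have hv_mem : ∀ i : Fin (n+1), i.1 < b + 1 → v i ∈ x := by
    intro i hi
    have hieq : (finSumFinEquiv.trans (finCongr hsum)).symm i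
        = Sum.inl (⟨i.1, hi⟩ : Fin (b+1)) := by
      rw [Equiv.symm_trans_apply]
      have hcast : (finCongr hsum).symm i = Fin.castAdd (n-b) ⟨i.1, hi⟩ := by
        ext
        simp
      rw [hcast, finSumFinEquiv_symm_apply_castAdd]
    have hvi : v i = ((bx ⟨i.1, hi⟩ : x) : Fin (n+1) → F) := by
      rw [show v i = _ from Module.Basis.reindex_apply _ _ i, hieq, Module.Basis.map_apply]
      rw [show ((bx.prod by') (Sum.inl ⟨i.1, hi⟩)) = (bx ⟨i.1, hi⟩, (0 : y)) from
        Prod.ext (Module.Basis.prod_apply_inl_fst _ _ _) (Module.Basis.prod_apply_inl_snd _ _ _)]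
      rw [Submodule.coe_prodEquivOfIsCompl']
      simp
    rw [hvi]
    exact (bx ⟨i.1, hi⟩).2
  -- index sets
  set xIdx : Finset (Fin (n+1)) := Finset.univ.filter (fun i => i.1 < b+1) with hxIdxdef
  have hxc : xIdx.card = b + 1 := card_filter_val_lt _ _ (by omega)
  have hxdc : ∀ a c : Fin (n+1), a ≤ c → c ∈ xIdx → a ∈ xIdx := by
    intro a c hac hc
    rw [hxIdxdef, Finset.mem_filter] at *
    exact ⟨Finset.mem_univ _, lt_of_le_of_lt (by exact_mod_cast hac) hc.2⟩
  -- x as the span of part of the basis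
  have hximg : v '' ↑xIdx = Set.range (fun i : {i // i ∈ xIdx} => v i) :=
    Set.image_eq_range _ _
  have hxspan : Submodule.span F (v '' ↑xIdx) = x := by
    apply Submodule.eq_of_le_of_finrank_le
    · rw [Submodule.span_le]
      rintro _ ⟨i, hi, rfl⟩
      refine hv_mem i ?_
      rw [Finset.mem_coe] at hi
      have := Finset.mem_filter.mp hi
      exact this.2
    · have hli : LinearIndependent F (fun i : {i // i ∈ xIdx} => v i.1) :=
        v.linearIndependent.comp _ Subtype.val_injective
      rw [hximg, finrank_span_eq_card hli, Fintype.card_coe, hxc, hx]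
  -- the collection of admissible index sets
  set C : Finset (Finset (Fin (n+1))) := Finset.univ.filter
    (fun S : Finset (Fin (n+1)) => S.card = k+1 ∧ δ+1 ≤ (S ∩ xIdx).card) with hCdef
  have hCcard : ∀ S : {S // S ∈ C}, S.1.card = k + 1 :=
    fun S => (Finset.mem_filter.mp S.2).2.1
  set L : {S // S ∈ C} → List (Fin (n+1)) :=
    fun S => List.ofFn ⇑(S.1.orderEmbOfFin (hCcard S)) with hLdef
  set fL : {S // S ∈ C} → ExteriorAlgebra F (Fin (n+1) → F) :=
    fun S => eL v (L S) with hfLdef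
  have hsum2 : k + 1 = (δ + 1) + (k - δ) := by omega
  -- linear independence
  have hLsort : ∀ S, (L S).Pairwise (· < ·) := by
    intro S
    rw [hLdef, List.pairwise_ofFn]
    intro a c hac
    exact (S.1.orderEmbOfFin (hCcard S)).strictMono hac
  have hLlen : ∀ S, (L S).length = k + 1 := fun S => List.length_ofFn
  have hLtoFinset : ∀ S : {S // S ∈ C}, (L S).toFinset = S.1 := by
    intro S
    ext a
    rw [hLdef, List.mem_toFinset, List.mem_ofFn]
    rw [← Set.mem_range, Finset.range_orderEmbOfFin]
    exact Iff.rfl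
  have hLinj : Function.Injective L := by
    intro S T h
    apply Subtype.ext
    rw [← hLtoFinset S, ← hLtoFinset T, h]
  have hLI : LinearIndependent F fL :=
    linearIndependent_eL v L (k+1) hLsort hLlen hLinj
  -- span equality
  have hspan_eq : W = Submodule.span F (Set.range fL) := by
    rw [hW]
    apply le_antisymm
    · rw [Submodule.span_le]
      rintro w ⟨u, t, hu, rfl⟩
      -- expand the wedge of general vectors in terms of basis wedges
      set m' : Fin (k+1) → (Fin (n+1) → F) := fun j =>
        if h : j.1 < δ + 1 then u ⟨j.1, h⟩ else t ⟨j.1 - (δ+1), by omega⟩ with hm'def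
      have hgen : ((List.ofFn fun i => ι F (u i)) ++ (List.ofFn fun i => ι F (t i))).prod
          = ExteriorAlgebra.ιMulti F (k+1) m' := by
        rw [ExteriorAlgebra.ιMulti_apply]
        rw [ofFn_split hsum2 (fun i => ι F (m' i))]
        congr 1
        congr 1
        · congr 1
          funext i
          rw [hm'def]
          dsimp only
          rw [dif_pos (show (Fin.cast hsum2.symm (Fin.castAdd (k-δ) i)).1 < δ+1 from i.2)]
          congr 2
        · congr 1
          funext i
          rw [hm'def]
          dsimp only
          rw [dif_neg (show ¬(Fin.cast hsum2.symm (Fin.natAdd (δ+1) i)).1 < δ+1 by simp; omega)]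
          congr 2
          ext
          simp
      have hterm : ∀ r : Fin (k+1) → Fin (n+1),
          (∀ j : Fin (k+1), r j ∈ (if j.1 < δ+1 then xIdx else Finset.univ)) →
          ExteriorAlgebra.ιMulti F (k+1) (fun j => v (r j))
            ∈ Submodule.span F (Set.range fL) := by
        intro r hr
        by_cases hinj : Function.Injective r
        · set S : Finset (Fin (n+1)) := Finset.univ.image r with hSdef
          have hScard : S.card = k + 1 := by
            rw [hSdef, Finset.card_image_of_injective _ hinj, Finset.card_univ,
              Fintype.card_fin]
          have hSC : S ∈ C := by
            rw [hCdef, Finset.mem_filter]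
            refine ⟨Finset.mem_univ _, hScard, ?_⟩
            have hsub : (Finset.univ.filter (fun j : Fin (k+1) => j.1 < δ+1)).image r
                ⊆ S ∩ xIdx := by
              intro a ha
              obtain ⟨j, hj, rfl⟩ := Finset.mem_image.mp ha
              refine Finset.mem_inter.mpr
                ⟨Finset.mem_image.mpr ⟨j, Finset.mem_univ _, rfl⟩, ?_⟩
              have h3 := hr j
              rwa [if_pos (Finset.mem_filter.mp hj).2] at h3
            have hcard2 :
                ((Finset.univ.filter (fun j : Fin (k+1) => j.1 < δ+1)).image r).card
                  = δ + 1 := by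
              rw [Finset.card_image_of_injective _ hinj, card_filter_val_lt _ _ (by omega)]
            calc δ + 1 = _ := hcard2.symm
              _ ≤ (S ∩ xIdx).card := Finset.card_le_card hsub
          have hrbij : Function.Bijective (fun j : Fin (k+1) =>
              (⟨r j, Finset.mem_image.mpr ⟨j, Finset.mem_univ _, rfl⟩⟩ : {a // a ∈ S})) := by
            rw [Fintype.bijective_iff_injective_and_card]
            refine ⟨fun a c h => hinj (congrArg Subtype.val h), ?_⟩
            rw [Fintype.card_coe, hScard, Fintype.card_fin]
          set σ : Equiv.Perm (Fin (k+1)) :=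
            (Equiv.ofBijective _ hrbij).trans (S.orderIsoOfFin hScard).toEquiv.symm with hσdef
          have hcomm : ((fun j => v (S.orderEmbOfFin hScard j)) ∘ σ) = fun j => v (r j) := by
            funext j
            show v (S.orderEmbOfFin hScard (σ j)) = v (r j)
            congr 1
            rw [← Finset.coe_orderIsoOfFin_apply]
            show (((S.orderIsoOfFin hScard).toEquiv ((S.orderIsoOfFin hScard).toEquiv.symm
              ⟨r j, Finset.mem_image.mpr ⟨j, Finset.mem_univ _, rfl⟩⟩)) : Fin (n+1)) = r j
            rw [Equiv.apply_symm_apply]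
          have hperm := AlternatingMap.map_perm (ExteriorAlgebra.ιMulti F (k+1))
            (fun j => v (S.orderEmbOfFin hScard j)) σ
          rw [hcomm] at hperm
          have hfLS : fL ⟨S, hSC⟩
              = ExteriorAlgebra.ιMulti F (k+1) (fun j => v (S.orderEmbOfFin hScard j)) := by
            rw [hfLdef]
            dsimp only
            rw [hLdef]
            dsimp only
            rw [eL_ofFn]
          rw [hperm, ← hfLS]
          rcases Int.units_eq_one_or (Equiv.Perm.sign σ) with hs | hs
          · rw [hs, one_smul]
            exact Submodule.subset_span ⟨⟨S, hSC⟩, rfl⟩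
          · rw [hs]
            rw [show ((-1 : ℤˣ) • fL ⟨S, hSC⟩) = -(fL ⟨S, hSC⟩) by simp]
            exact Submodule.neg_mem _ (Submodule.subset_span ⟨⟨S, hSC⟩, rfl⟩)
        · have hninj : ¬ Function.Injective (fun j => v (r j)) :=
            fun h => hinj (fun a c hrc => h (congrArg v hrc))
          rw [AlternatingMap.map_eq_zero_of_not_injective _ _ hninj]
          exact Submodule.zero_mem _
      have hrep : ∀ j : Fin (k+1), ∃ c : Fin (n+1) → F,
          ∑ i ∈ (if j.1 < δ + 1 then xIdx else Finset.univ), c i • v i = m' j := by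
        intro j
        by_cases hj : j.1 < δ + 1
        · have hmx : m' j ∈ Submodule.span F (↑(xIdx.image v) : Set (Fin (n+1) → F)) := by
            rw [Finset.coe_image, hxspan]
            rw [hm'def]
            dsimp only
            rw [dif_pos hj]
            exact hu _
          obtain ⟨cf, -, hcf⟩ := Submodule.mem_span_finset.mp hmx
          refine ⟨fun i => cf (v i), ?_⟩
          rw [if_pos hj, ← hcf, Finset.sum_image (fun a _ c _ h => v.injective h)]
        · refine ⟨fun i => v.repr (m' j) i, ?_⟩
          rw [if_neg hj]
          exact Module.Basis.sum_repr v (m' j)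
      choose cc hcc using hrep
      have hm'eq : m' = fun j => ∑ i ∈ (if j.1 < δ+1 then xIdx else Finset.univ),
          cc j i • v i := funext fun j => (hcc j).symm
      have hfinal : ExteriorAlgebra.ιMulti F (k+1) m'
          = ∑ r ∈ Fintype.piFinset
              (fun j : Fin (k+1) => if j.1 < δ+1 then xIdx else Finset.univ),
              (∏ j, cc j (r j)) • ExteriorAlgebra.ιMulti F (k+1) (fun j => v (r j)) := by
        have h1 := MultilinearMap.map_sum_finset
          (f := (ExteriorAlgebra.ιMulti F (k+1) (M := Fin (n+1) → F)).toMultilinearMap)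
          (g := fun j i => cc j i • v i)
          (A := fun j : Fin (k+1) => if j.1 < δ+1 then xIdx else Finset.univ)
        calc ExteriorAlgebra.ιMulti F (k+1) m'
            = (ExteriorAlgebra.ιMulti F (k+1) (M := Fin (n+1) → F)).toMultilinearMap
              (fun j => ∑ i ∈ (if j.1 < δ+1 then xIdx else Finset.univ), cc j i • v i) := by
              rw [← hm'eq]
              rfl
          _ = ∑ r ∈ Fintype.piFinset
              (fun j : Fin (k+1) => if j.1 < δ+1 then xIdx else Finset.univ),
              (ExteriorAlgebra.ιMulti F (k+1) (M := Fin (n+1) → F)).toMultilinearMap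
                (fun j => cc j (r j) • v (r j)) := h1
          _ = _ := by
              refine Finset.sum_congr rfl (fun r _ => ?_)
              rw [MultilinearMap.map_smul_univ]
              rfl
      rw [hgen, hfinal]
      exact Submodule.sum_mem _ (fun r hr => Submodule.smul_mem _ _
        (hterm r (fun j => (Fintype.mem_piFinset.mp hr) j)))
    · rw [Submodule.span_le]
      rintro _ ⟨S, rfl⟩
      refine Submodule.subset_span ?_
      refine ⟨fun i => v (S.1.orderEmbOfFin (hCcard S) (Fin.cast hsum2.symm (Fin.castAdd (k-δ) i))),
              fun i => v (S.1.orderEmbOfFin (hCcard S) (Fin.cast hsum2.symm (Fin.natAdd (δ+1) i))),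
              ?_, ?_⟩
      · intro i
        apply hv_mem
        have hmem : S.1.orderEmbOfFin (hCcard S) (Fin.cast hsum2.symm (Fin.castAdd (k-δ) i))
            ∈ xIdx := by
          apply orderEmb_initial S.1 xIdx (hCcard S) hxdc (δ+1)
            (Finset.mem_filter.mp S.2).2.2
          exact i.2
        exact (Finset.mem_filter.mp hmem).2
      · show fL S = _
        rw [hfLdef]
        dsimp only
        rw [hLdef]
        dsimp only
        rw [eL, List.map_ofFn, ofFn_split hsum2]
        rfl
  rw [hspan_eq, finrank_span_eq_card hLI, Fintype.card_coe, hCdef]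
  exact card_collection n k b δ hδb hbk hkn xIdx hxc
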